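/- Let Σ = {a_1,…,a_k} be a finite alphabet and L ⊆ Σ* a commutative regular language. Then the following are equivalent: (i) the number of equivalence classes of the Nerode right-congruence ≡_L equals the product over j = 1,…,k of the number of distinct classes among { [a_j^m]_{≡_L} : m ∈ ℕ }; (ii) for all words u, v ∈ Σ*, u ≡_L v implies a_j^{|u|_{a_j}} ≡_L a_j^{|v|_{a_j}} for every j ∈ {1,…,k}; (iii) for all words u, v ∈ Σ*, u ≡_L v holds if and only if a_j^{|u|_{a_j}} ≡_L a_j^{|v|_{a_j}} for every j ∈ {1,…,k}. -/

import Mathlib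

/-- The Nerode right-congruence of a language `L`: `u ≡_L v` iff
for all words `x`, `u ++ x ∈ L ↔ v ++ x ∈ L`. -/
def NerodeEq {α : Type*} (L : Set (List α)) (u v : List α) : Prop :=
  ∀ x : List α, u ++ x ∈ L ↔ v ++ x ∈ L

/-- The Nerode right-congruence as a setoid on words. -/
def nerodeSetoid {α : Type*} (L : Set (List α)) : Setoid (List α) where
  r := NerodeEq L
  iseqv := ⟨fun _ _ => Iff.rfl, fun h x => (h x).symm, fun h1 h2 x => (h1 x).trans (h2 x)⟩

/-- A language is regular iff its Nerode right-congruence has finitely many classes. -/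
def RegularLang {α : Type*} (L : Set (List α)) : Prop :=
  Finite (Quotient (nerodeSetoid L))

/-- The state complexity of `L`: the number of Nerode right-congruence classes. -/
noncomputable def sc {α : Type*} (L : Set (List α)) : ℕ :=
  Nat.card (Quotient (nerodeSetoid L))

/-- A language is commutative if membership only depends on the number of
occurrences of each letter. -/
def CommutativeLang {α : Type*} [DecidableEq α] (L : Set (List α)) : Prop :=
  ∀ u v : List α, (∀ x : α, u.count x = v.count x) → (u ∈ L ↔ v ∈ L)

/-- A (commutative) language has a product-form minimal automaton iff for all words
`u, v`: `u ≡_L v` holds if and only if `x^{|u|_x} ≡_L x^{|v|_x}` for every letter `x`. -/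
def HasProductForm {α : Type*} [DecidableEq α] (L : Set (List α)) : Prop :=
  ∀ u v : List α,
    NerodeEq L u v ↔
      ∀ x : α, NerodeEq L (List.replicate (u.count x) x) (List.replicate (v.count x) x)

section Aux

variable {α : Type*} [DecidableEq α] {L : Set (List α)}

/-- Canonical word with given letter counts. -/
def canonWord {k : ℕ} (m : Fin k → ℕ) : List (Fin k) :=
  (List.finRange k).flatMap fun j => List.replicate (m j) j

lemma count_flatMap_rep {k : ℕ} (m : Fin k → ℕ) (j : Fin k) :
    ∀ ℓ : List (Fin k), ℓ.Nodup →
      (ℓ.flatMap fun i => List.replicate (m i) i).count j = if j ∈ ℓ then m j else 0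
  | [], _ => by simp
  | i :: ℓ, h => by
    rcases List.nodup_cons.mp h with ⟨hi, hℓ⟩
    simp only [List.flatMap_cons, List.count_append, List.count_replicate,
      count_flatMap_rep m j ℓ hℓ, List.mem_cons]
    by_cases hji : j = i
    · subst hji
      simp [hi]
    · simp [hji, Ne.symm hji]

lemma count_canonWord {k : ℕ} (m : Fin k → ℕ) (j : Fin k) :
    (canonWord m).count j = m j := by
  rw [canonWord, count_flatMap_rep m j _ (List.nodup_finRange k)]
  simp

lemma nerode_of_count (hcomm : CommutativeLang L) {u v : List α}
    (h : ∀ j, u.count j = v.count j) : NerodeEq L u v := fun x =>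
  hcomm (u ++ x) (v ++ x) fun j => by simp [List.count_append, h j]

lemma nerode_append_right {u v : List α} (h : NerodeEq L u v) (w : List α) :
    NerodeEq L (u ++ w) (v ++ w) := fun x => by
  rw [List.append_assoc, List.append_assoc]; exact h (w ++ x)

lemma nerode_append_left (hcomm : CommutativeLang L) {u v : List α}
    (h : NerodeEq L u v) (w : List α) : NerodeEq L (w ++ u) (w ++ v) := fun x => by
  have h1 : (w ++ u) ++ x ∈ L ↔ u ++ (w ++ x) ∈ L :=
    hcomm _ _ fun j => by simp [List.count_append]; ring
  have h2 : (w ++ v) ++ x ∈ L ↔ v ++ (w ++ x) ∈ L :=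
    hcomm _ _ fun j => by simp [List.count_append]; ring
  rw [h1, h2]; exact h (w ++ x)

lemma nerode_flatMap {k : ℕ} {L : Set (List (Fin k))} (hcomm : CommutativeLang L)
    (m m' : Fin k → ℕ) :
    ∀ ℓ : List (Fin k),
      (∀ j ∈ ℓ, NerodeEq L (List.replicate (m j) j) (List.replicate (m' j) j)) →
      NerodeEq L (ℓ.flatMap fun j => List.replicate (m j) j)
        (ℓ.flatMap fun j => List.replicate (m' j) j)
  | [], _ => fun _ => Iff.rfl
  | i :: ℓ, h => by
    simp only [List.flatMap_cons]
    have h1 := nerode_append_right (h i List.mem_cons_self)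
      (ℓ.flatMap fun j => List.replicate (m j) j)
    have h2 := nerode_append_left hcomm
      (nerode_flatMap hcomm m m' ℓ fun j hj => h j (List.mem_cons_of_mem i hj))
      (List.replicate (m' i) i)
    exact fun x => (h1 x).trans (h2 x)

/-- The always-true direction: if all single-letter powers are equivalent, the words are. -/
lemma nerode_of_letters {k : ℕ} {L : Set (List (Fin k))} (hcomm : CommutativeLang L)
    {u v : List (Fin k)}
    (h : ∀ j, NerodeEq L (List.replicate (u.count j) j) (List.replicate (v.count j) j)) :
    NerodeEq L u v := by
  have hu : NerodeEq L u (canonWord fun j => u.count j) :=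
    nerode_of_count hcomm fun j => (count_canonWord (fun j => u.count j) j).symm
  have hv : NerodeEq L (canonWord fun j => v.count j) v :=
    nerode_of_count hcomm fun j => count_canonWord (fun j => v.count j) j
  have hm := nerode_flatMap hcomm (fun j => u.count j) (fun j => v.count j)
    (List.finRange k) (fun j _ => h j)
  exact fun x => ((hu x).trans (hm x)).trans (hv x)

end Aux

/-- Characterizations of commutative regular languages whose minimal automaton has
product-form (Theorem 2 of the paper): for a commutative regular language `L` over
`Σ = {a_1, …, a_k}`, the following are equivalent: (i) the number of Nerode classes of `L`
equals the product over the letters `j` of the number of classes of the form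
`[a_j^m]`; (ii) `u ≡_L v` implies `a_j^{|u|_{a_j}} ≡_L a_j^{|v|_{a_j}}` for all `j`;
(iii) `u ≡_L v` iff `a_j^{|u|_{a_j}} ≡_L a_j^{|v|_{a_j}}` for all `j`. -/

theorem stmt0 (k : ℕ) (L : Set (List (Fin k)))
    (hcomm : CommutativeLang L) (hreg : RegularLang L) :
    ((sc L = ∏ j : Fin k,
        Nat.card (Set.range fun m : ℕ => (⟦List.replicate m j⟧ : Quotient (nerodeSetoid L))))
      ↔ (∀ u v : List (Fin k), NerodeEq L u v →
          ∀ j : Fin k,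
            NerodeEq L (List.replicate (u.count j) j) (List.replicate (v.count j) j)))
    ∧
    ((∀ u v : List (Fin k), NerodeEq L u v →
          ∀ j : Fin k,
            NerodeEq L (List.replicate (u.count j) j) (List.replicate (v.count j) j))
      ↔ HasProductForm L) := by
  haveI hQ : Finite (Quotient (nerodeSetoid L)) := hreg
  have easy : (∀ u v : List (Fin k), NerodeEq L u v →
      ∀ j : Fin k, NerodeEq L (List.replicate (u.count j) j) (List.replicate (v.count j) j))
      ↔ HasProductForm L := by
    constructor
    · intro h u v
      exact ⟨fun huv j => h u v huv j, fun h' => nerode_of_letters hcomm h'⟩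
    · intro h u v huv j
      exact (h u v).mp huv j
  refine ⟨?_, easy⟩
  let R : Fin k → Set (Quotient (nerodeSetoid L)) := fun j =>
    Set.range fun m : ℕ => (⟦List.replicate m j⟧ : Quotient (nerodeSetoid L))
  haveI : ∀ j, Finite (R j) := fun j => Subtype.finite
  let mrep : (∀ j, R j) → Fin k → ℕ := fun c j => (c j).2.choose
  have hmrep : ∀ (c : ∀ j, R j) (j : Fin k),
      (⟦List.replicate (mrep c j) j⟧ : Quotient (nerodeSetoid L)) = (c j).1 :=
    fun c j => (c j).2.choose_spec
  let Ψ : (∀ j, R j) → Quotient (nerodeSetoid L) := fun c => ⟦canonWord (mrep c)⟧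
  let tup : List (Fin k) → ∀ j, R j := fun u j =>
    ⟨⟦List.replicate (u.count j) j⟧, u.count j, rfl⟩
  have hΨtup : ∀ u : List (Fin k), Ψ (tup u) = ⟦u⟧ := by
    intro u
    apply Quotient.sound
    apply nerode_of_letters hcomm
    intro j
    rw [count_canonWord]
    exact Quotient.exact (hmrep (tup u) j)
  have hsurj : Function.Surjective Ψ := fun q => Quotient.inductionOn q fun u => ⟨tup u, hΨtup u⟩
  have key : (sc L = ∏ j : Fin k, Nat.card (R j)) ↔ Function.Injective Ψ := by
    rw [show (∏ j : Fin k, Nat.card (R j)) = Nat.card (∀ j, R j) from Nat.card_pi.symm]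
    constructor
    · intro h
      exact ((Nat.bijective_iff_surjective_and_card Ψ).mpr ⟨hsurj, h.symm⟩).1
    · intro h
      exact (Nat.card_eq_of_bijective Ψ ⟨h, hsurj⟩).symm
  have inj_iff : Function.Injective Ψ ↔ (∀ u v : List (Fin k), NerodeEq L u v →
      ∀ j : Fin k,
        NerodeEq L (List.replicate (u.count j) j) (List.replicate (v.count j) j)) := by
    constructor
    · intro hinj u v huv j
      have heq : tup u = tup v := hinj (by rw [hΨtup, hΨtup]; exact Quotient.sound huv)
      exact Quotient.exact (congrArg Subtype.val (congrFun heq j))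
    · intro h c c' hcc
      funext j
      have hne : NerodeEq L (canonWord (mrep c)) (canonWord (mrep c')) := Quotient.exact hcc
      have h2 := h _ _ hne j
      rw [count_canonWord, count_canonWord] at h2
      apply Subtype.ext
      rw [← hmrep c j, ← hmrep c' j]
      exact Quotient.sound h2
  exact key.trans inj_iff
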